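/- Let R ⊆ ℤ² be finite and nonempty, let m : R → [0,∞), and let τ : ∂°R → ℝ satisfy |τ_y| ≤ π/5 for all y ∈ ∂°R. Then every maximizer ν of θ ↦ −K_R(θ|τ) over the set {θ : R → ℝ : |θ_x| ≤ π/2 for all x ∈ R} satisfies the Euler–Lagrange equations: for every x ∈ R, Σ_{y∈R, y∼x} sin(ν_x − ν_y) + Σ_{y∈∂°R, y∼x} sin(ν_x − τ_y) + (m_x/2) sin(ν_x) cos(ν_x) = 0. -/

import Mathlib

open Finset

/-- Nearest neighbours of a site of `ℤ²` (Euclidean distance 1). -/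
def nbrs (x : ℤ × ℤ) : Finset (ℤ × ℤ) :=
  {(x.1 + 1, x.2), (x.1 - 1, x.2), (x.1, x.2 + 1), (x.1, x.2 - 1)}

/-- Outer boundary `∂°R = {x ∉ R : dist(x,R) ≤ 1}`. -/
def outerBdry (R : Finset (ℤ × ℤ)) : Finset (ℤ × ℤ) := (R.biUnion nbrs) \ R

/-- `−K_R(θ|τ)`: sum over unordered nearest-neighbour pairs inside `R`
(written as half the sum over ordered pairs), plus the boundary interaction,
plus the mass term `(1/4) Σ m_x cos² θ_x`. -/
noncomputable def negK (R : Finset (ℤ × ℤ)) (m τ θ : ℤ × ℤ → ℝ) : ℝ :=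
  (1 / 2) * ∑ x ∈ R, ∑ y ∈ R ∩ nbrs x, (Real.cos (θ x - θ y) - 1)
    + ∑ x ∈ R, ∑ y ∈ outerBdry R ∩ nbrs x, (Real.cos (θ x - τ y) - 1)
    + (1 / 4) * ∑ x ∈ R, m x * Real.cos (θ x) ^ 2

lemma nbrs_symm {x y : ℤ × ℤ} : y ∈ nbrs x ↔ x ∈ nbrs y := by
  simp only [nbrs, Finset.mem_insert, Finset.mem_singleton, Prod.ext_iff]
  omega

lemma not_mem_nbrs_self (x : ℤ × ℤ) : x ∉ nbrs x := by
  simp only [nbrs, Finset.mem_insert, Finset.mem_singleton, Prod.ext_iff]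
  omega

noncomputable def negKrest (R : Finset (ℤ × ℤ)) (m τ ν : ℤ × ℤ → ℝ) (x : ℤ × ℤ) : ℝ :=
  (1 / 2) * ∑ u ∈ R.erase x, ∑ y ∈ (R.erase x) ∩ nbrs u, (Real.cos (ν u - ν y) - 1)
    + ∑ u ∈ R.erase x, ∑ y ∈ outerBdry R ∩ nbrs u, (Real.cos (ν u - τ y) - 1)
    + (1 / 4) * ∑ u ∈ R.erase x, m u * Real.cos (ν u) ^ 2

lemma negK_update (R : Finset (ℤ × ℤ)) (m τ ν : ℤ × ℤ → ℝ) (x : ℤ × ℤ) (hx : x ∈ R) (t : ℝ) :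
    negK R m τ (Function.update ν x t) =
      (∑ y ∈ R ∩ nbrs x, (Real.cos (t - ν y) - 1))
      + (∑ y ∈ outerBdry R ∩ nbrs x, (Real.cos (t - τ y) - 1))
      + (m x / 4) * Real.cos t ^ 2 + negKrest R m τ ν x := by
  set θ := Function.update ν x t with hθ
  have hθx : θ x = t := Function.update_self x t ν
  have hθne : ∀ z, z ≠ x → θ z = ν z := fun z hz => Function.update_of_ne hz t ν
  -- mass term
  have hC : ∑ u ∈ R, m u * Real.cos (θ u) ^ 2
      = m x * Real.cos t ^ 2 + ∑ u ∈ R.erase x, m u * Real.cos (ν u) ^ 2 := by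
    rw [← Finset.add_sum_erase R _ hx, hθx]
    congr 1
    exact Finset.sum_congr rfl fun u hu => by rw [hθne u (Finset.ne_of_mem_erase hu)]
  -- boundary term
  have hB : ∑ u ∈ R, ∑ y ∈ outerBdry R ∩ nbrs u, (Real.cos (θ u - τ y) - 1)
      = (∑ y ∈ outerBdry R ∩ nbrs x, (Real.cos (t - τ y) - 1))
        + ∑ u ∈ R.erase x, ∑ y ∈ outerBdry R ∩ nbrs u, (Real.cos (ν u - τ y) - 1) := by
    rw [← Finset.add_sum_erase R _ hx, hθx]
    congr 1
    exact Finset.sum_congr rfl fun u hu => by rw [hθne u (Finset.ne_of_mem_erase hu)]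
  -- bulk term
  have hA : ∑ u ∈ R, ∑ y ∈ R ∩ nbrs u, (Real.cos (θ u - θ y) - 1)
      = 2 * (∑ y ∈ R ∩ nbrs x, (Real.cos (t - ν y) - 1))
        + ∑ u ∈ R.erase x, ∑ y ∈ (R.erase x) ∩ nbrs u, (Real.cos (ν u - ν y) - 1) := by
    rw [← Finset.add_sum_erase R _ hx, hθx]
    have h1 : ∑ y ∈ R ∩ nbrs x, (Real.cos (t - θ y) - 1)
        = ∑ y ∈ R ∩ nbrs x, (Real.cos (t - ν y) - 1) := by
      refine Finset.sum_congr rfl fun y hy => ?_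
      have hyx : y ≠ x := fun h => not_mem_nbrs_self x (h ▸ (Finset.mem_inter.mp hy).2)
      rw [hθne y hyx]
    rw [h1]
    have h2 : ∀ u ∈ R.erase x, ∑ y ∈ R ∩ nbrs u, (Real.cos (θ u - θ y) - 1)
        = (∑ y ∈ (R.erase x) ∩ nbrs u, (Real.cos (ν u - ν y) - 1))
          + (if x ∈ nbrs u then Real.cos (ν u - t) - 1 else 0) := by
      intro u hu
      rw [hθne u (Finset.ne_of_mem_erase hu)]
      have hset : (R ∩ nbrs u).erase x = (R.erase x) ∩ nbrs u := by
        ext y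
        simp only [Finset.mem_erase, Finset.mem_inter]
        tauto
      have hcong : ∑ y ∈ (R.erase x) ∩ nbrs u, (Real.cos (ν u - θ y) - 1)
          = ∑ y ∈ (R.erase x) ∩ nbrs u, (Real.cos (ν u - ν y) - 1) := by
        refine Finset.sum_congr rfl fun y hy => ?_
        rw [hθne y (Finset.mem_erase.mp (Finset.mem_inter.mp hy).1).1]
      by_cases hxu : x ∈ nbrs u
      · have hmem : x ∈ R ∩ nbrs u := Finset.mem_inter.mpr ⟨hx, hxu⟩
        rw [if_pos hxu, ← Finset.add_sum_erase _ _ hmem, hθx, hset, hcong, add_comm]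
      · rw [if_neg hxu, add_zero]
        have hs : R ∩ nbrs u = (R.erase x) ∩ nbrs u := by
          ext y
          simp only [Finset.mem_erase, Finset.mem_inter]
          constructor
          · rintro ⟨h1, h2⟩; exact ⟨⟨fun h => hxu (h ▸ h2), h1⟩, h2⟩
          · rintro ⟨⟨_, h1⟩, h2⟩; exact ⟨h1, h2⟩
        rw [hs, hcong]
    rw [Finset.sum_congr rfl h2, Finset.sum_add_distrib, ← Finset.sum_filter]
    have hfil : (R.erase x).filter (fun u => x ∈ nbrs u) = R ∩ nbrs x := by
      ext u
      simp only [Finset.mem_filter, Finset.mem_erase, Finset.mem_inter, ← nbrs_symm (x := x)]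
      constructor
      · rintro ⟨⟨_, h1⟩, h2⟩; exact ⟨h1, h2⟩
      · rintro ⟨h1, h2⟩
        exact ⟨⟨fun h => not_mem_nbrs_self x (h ▸ h2), h1⟩, h2⟩
    rw [hfil]
    have hsym : ∑ u ∈ R ∩ nbrs x, (Real.cos (ν u - t) - 1)
        = ∑ u ∈ R ∩ nbrs x, (Real.cos (t - ν u) - 1) := by
      refine Finset.sum_congr rfl fun u hu => ?_
      rw [← Real.cos_neg, neg_sub]
    rw [hsym]; ring
  show (1 / 2) * ∑ u ∈ R, ∑ y ∈ R ∩ nbrs u, (Real.cos (θ u - θ y) - 1)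
      + ∑ u ∈ R, ∑ y ∈ outerBdry R ∩ nbrs u, (Real.cos (θ u - τ y) - 1)
      + (1 / 4) * ∑ u ∈ R, m u * Real.cos (θ u) ^ 2 = _
  rw [hA, hB, hC, negKrest]; ring


/-- Every maximizer of `−K_R(·|τ)` over `{θ : |θ_x| ≤ π/2 on R}` satisfies the
Euler–Lagrange equations. -/
theorem stmt1 (R : Finset (ℤ × ℤ)) (hR : R.Nonempty)
    (m : ℤ × ℤ → ℝ) (hm : ∀ x ∈ R, 0 ≤ m x)
    (τ : ℤ × ℤ → ℝ) (hτ : ∀ y ∈ outerBdry R, |τ y| ≤ Real.pi / 5)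
    (ν : ℤ × ℤ → ℝ) (hν : ∀ x ∈ R, |ν x| ≤ Real.pi / 2)
    (hmax : ∀ θ : ℤ × ℤ → ℝ, (∀ x ∈ R, |θ x| ≤ Real.pi / 2) →
      negK R m τ θ ≤ negK R m τ ν) :
    ∀ x ∈ R,
      (∑ y ∈ R ∩ nbrs x, Real.sin (ν x - ν y))
        + (∑ y ∈ outerBdry R ∩ nbrs x, Real.sin (ν x - τ y))
        + (m x / 2) * Real.sin (ν x) * Real.cos (ν x) = 0 := by
  intro x hx
  set D : ℝ := (∑ y ∈ R ∩ nbrs x, Real.sin (ν x - ν y))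
      + (∑ y ∈ outerBdry R ∩ nbrs x, Real.sin (ν x - τ y))
      + (m x / 2) * Real.sin (ν x) * Real.cos (ν x) with hD
  show D = 0
  have hpi := Real.pi_pos
  -- the one-variable slice and its derivative
  have hφ : HasDerivAt (fun t => negK R m τ (Function.update ν x t)) (-D) (ν x) := by
    have hfun : (fun t => negK R m τ (Function.update ν x t))
        = fun t => (∑ y ∈ R ∩ nbrs x, (Real.cos (t - ν y) - 1))
          + (∑ y ∈ outerBdry R ∩ nbrs x, (Real.cos (t - τ y) - 1))
          + (m x / 4) * Real.cos t ^ 2 + negKrest R m τ ν x :=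
      funext fun t => negK_update R m τ ν x hx t
    rw [hfun]
    have hd1 : HasDerivAt (fun t : ℝ => ∑ y ∈ R ∩ nbrs x, (Real.cos (t - ν y) - 1))
        (∑ y ∈ R ∩ nbrs x, -Real.sin (ν x - ν y)) (ν x) := by
      refine HasDerivAt.fun_sum fun y _ => ?_
      have h := (Real.hasDerivAt_cos (ν x - ν y)).comp (ν x)
        ((hasDerivAt_id (ν x)).sub_const (ν y))
      simpa using h.sub_const 1
    have hd2 : HasDerivAt (fun t : ℝ => ∑ y ∈ outerBdry R ∩ nbrs x, (Real.cos (t - τ y) - 1))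
        (∑ y ∈ outerBdry R ∩ nbrs x, -Real.sin (ν x - τ y)) (ν x) := by
      refine HasDerivAt.fun_sum fun y _ => ?_
      have h := (Real.hasDerivAt_cos (ν x - τ y)).comp (ν x)
        ((hasDerivAt_id (ν x)).sub_const (τ y))
      simpa using h.sub_const 1
    have hd3 : HasDerivAt (fun t : ℝ => (m x / 4) * Real.cos t ^ 2)
        ((m x / 4) * ((2 : ℕ) * Real.cos (ν x) ^ 1 * -Real.sin (ν x))) (ν x) :=
      ((Real.hasDerivAt_cos (ν x)).pow 2).const_mul _
    have h := ((hd1.add hd2).add hd3).add_const (negKrest R m τ ν x)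
    have h2 : -D = ∑ y ∈ R ∩ nbrs x, -Real.sin (ν x - ν y)
        + ∑ y ∈ outerBdry R ∩ nbrs x, -Real.sin (ν x - τ y)
        + m x / 4 * ((2 : ℕ) * Real.cos (ν x) ^ 1 * -Real.sin (ν x)) := by
      rw [hD, Finset.sum_neg_distrib, Finset.sum_neg_distrib]
      push_cast
      ring
    rw [h2]
    exact h
  -- maximality on the slice
  have hmaxOn : IsMaxOn (fun t => negK R m τ (Function.update ν x t))
      (Set.Icc (-(Real.pi / 2)) (Real.pi / 2)) (ν x) := by
    intro t ht
    simp only [Set.mem_setOf_eq, Function.update_eq_self]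
    apply hmax
    intro z hz
    by_cases hzx : z = x
    · subst hzx
      rw [Function.update_self]
      exact abs_le.mpr ⟨ht.1, ht.2⟩
    · rw [Function.update_of_ne hzx]
      exact hν z hz
  have ha_mem : ν x ∈ Set.Icc (-(Real.pi / 2)) (Real.pi / 2) := by
    have := abs_le.mp (hν x hx)
    exact ⟨this.1, this.2⟩
  -- D ≥ 0
  have hDge : 0 ≤ D := by
    rcases lt_or_eq_of_le (abs_le.mp (hν x hx)).2 with hlt | heq
    · -- interior from the right: move right
      have hseg : segment ℝ (ν x) (Real.pi / 2)
          ⊆ Set.Icc (-(Real.pi / 2)) (Real.pi / 2) :=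
        (convex_Icc _ _).segment_subset ha_mem (by constructor <;> linarith)
      have hcone := sub_mem_posTangentConeAt_of_segment_subset hseg
      have hle := hmaxOn.localize.hasFDerivWithinAt_nonpos
        hφ.hasFDerivAt.hasFDerivWithinAt hcone
      simp only [ContinuousLinearMap.toSpanSingleton_apply,
        smul_eq_mul] at hle
      have hc : (0 : ℝ) < Real.pi / 2 - ν x := by linarith
      have h0 : (Real.pi / 2 - ν x) * (-D) ≤ (Real.pi / 2 - ν x) * 0 := by
        rw [mul_zero]; exact hle
      have := le_of_mul_le_mul_left h0 hc
      linarith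
    · -- right endpoint: each term is nonneg
      rw [hD, heq]
      have h1 : 0 ≤ ∑ y ∈ R ∩ nbrs x, Real.sin (Real.pi / 2 - ν y) := by
        refine Finset.sum_nonneg fun y hy => ?_
        rw [Real.sin_pi_div_two_sub]
        have := abs_le.mp (hν y (Finset.mem_inter.mp hy).1)
        exact Real.cos_nonneg_of_mem_Icc ⟨this.1, this.2⟩
      have h2 : 0 ≤ ∑ y ∈ outerBdry R ∩ nbrs x, Real.sin (Real.pi / 2 - τ y) := by
        refine Finset.sum_nonneg fun y hy => ?_
        rw [Real.sin_pi_div_two_sub]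
        have := abs_le.mp (hτ y (Finset.mem_inter.mp hy).1)
        exact Real.cos_nonneg_of_mem_Icc ⟨by linarith [this.1], by linarith [this.2]⟩
      rw [Real.cos_pi_div_two]
      linarith
  -- D ≤ 0
  have hDle : D ≤ 0 := by
    rcases lt_or_eq_of_le (abs_le.mp (hν x hx)).1 with hlt | heq
    · -- interior from the left: move left
      have hseg : segment ℝ (ν x) (-(Real.pi / 2))
          ⊆ Set.Icc (-(Real.pi / 2)) (Real.pi / 2) :=
        (convex_Icc _ _).segment_subset ha_mem (by constructor <;> linarith)
      have hcone := sub_mem_posTangentConeAt_of_segment_subset hseg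
      have hle := hmaxOn.localize.hasFDerivWithinAt_nonpos
        hφ.hasFDerivAt.hasFDerivWithinAt hcone
      simp only [ContinuousLinearMap.toSpanSingleton_apply,
        smul_eq_mul] at hle
      have hc : (0 : ℝ) < Real.pi / 2 + ν x := by linarith
      have h0 : (Real.pi / 2 + ν x) * D ≤ (Real.pi / 2 + ν x) * 0 := by
        rw [mul_zero]
        calc (Real.pi / 2 + ν x) * D = (-(Real.pi / 2) - ν x) * (-D) := by ring
        _ ≤ 0 := hle
      exact le_of_mul_le_mul_left h0 hc
    · -- left endpoint: each term is nonpos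
      rw [hD, ← heq]
      have key : ∀ z : ℝ, Real.sin (-(Real.pi / 2) - z) = -Real.cos z := by
        intro z
        rw [show -(Real.pi / 2) - z = -(Real.pi / 2 - -z) by ring, Real.sin_neg,
          Real.sin_pi_div_two_sub, Real.cos_neg]
      have h1 : ∑ y ∈ R ∩ nbrs x, Real.sin (-(Real.pi / 2) - ν y) ≤ 0 := by
        refine Finset.sum_nonpos fun y hy => ?_
        rw [key]
        have := abs_le.mp (hν y (Finset.mem_inter.mp hy).1)
        have := Real.cos_nonneg_of_mem_Icc (x := ν y) ⟨this.1, this.2⟩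
        linarith
      have h2 : ∑ y ∈ outerBdry R ∩ nbrs x, Real.sin (-(Real.pi / 2) - τ y) ≤ 0 := by
        refine Finset.sum_nonpos fun y hy => ?_
        rw [key]
        have := abs_le.mp (hτ y (Finset.mem_inter.mp hy).1)
        have := Real.cos_nonneg_of_mem_Icc (x := τ y) ⟨by linarith [this.1], by linarith [this.2]⟩
        linarith
      have h3 : Real.cos (-(Real.pi / 2)) = 0 := by
        rw [Real.cos_neg, Real.cos_pi_div_two]
      rw [h3]
      linarith
  linarith
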